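/- Let n ∈ ℕ and for each i < n let μᵢ, νᵢ be probability measures on ℝ with finite second moments. Let μ = ⊗_{i<n} μᵢ and ν = ⊗_{i<n} νᵢ be the product measures on ℝⁿ (functions Fin n → ℝ). Then W₂²(μ, ν) = Σ_{i<n} W₂²(μᵢ, νᵢ), where W₂²(μ,ν) is the infimum over probability measures π on ℝⁿ × ℝⁿ with marginals μ and ν of ∫ Σ_{i<n} (xᵢ − yᵢ)² dπ(x,y), and W₂²(μᵢ,νᵢ) is the corresponding infimum on ℝ × ℝ with cost (x−y)². -/

import Mathlib

open MeasureTheory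
open scoped NNReal ENNReal

/-- Squared Wasserstein-2 distance between probability measures on `ℝⁿ` with cost
`Σ_i (xᵢ − yᵢ)²`: infimum of the transport cost over all couplings. -/
noncomputable def W2sqn (n : ℕ) (μ ν : Measure (Fin n → ℝ)) : ℝ≥0∞ :=
  ⨅ (π : Measure ((Fin n → ℝ) × (Fin n → ℝ))) (_ : IsProbabilityMeasure π)
    (_ : π.map Prod.fst = μ) (_ : π.map Prod.snd = ν),
    ∫⁻ p, ENNReal.ofReal (∑ i, (p.1 i - p.2 i) ^ 2) ∂π

/-- Squared Wasserstein-2 distance between probability measures on `ℝ` with cost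
`(x − y)²`: infimum of the transport cost over all couplings. -/
noncomputable def W2sq1 (μ ν : Measure ℝ) : ℝ≥0∞ :=
  ⨅ (π : Measure (ℝ × ℝ)) (_ : IsProbabilityMeasure π)
    (_ : π.map Prod.fst = μ) (_ : π.map Prod.snd = ν),
    ∫⁻ p, ENNReal.ofReal ((p.1 - p.2) ^ 2) ∂π

section Aux

/-- Pushforward of a finite product of probability measures under a coordinate
evaluation map is the corresponding factor. -/
lemma pi_map_eval' {n : ℕ} {α : Fin n → Type*} [∀ i, MeasurableSpace (α i)]
    (μ : ∀ i, Measure (α i)) [∀ i, IsProbabilityMeasure (μ i)] (i : Fin n) :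
    (Measure.pi μ).map (Function.eval i) = μ i := by
  classical
  ext s hs
  rw [Measure.map_apply (measurable_pi_apply i) hs, Set.eval_preimage, Measure.pi_pi]
  rw [Finset.prod_eq_single i (fun j _ hj => by simp [Function.update_of_ne hj])
      (fun h => absurd (Finset.mem_univ i) h)]
  simp

lemma cost1_meas : Measurable (fun p : ℝ × ℝ => ENNReal.ofReal ((p.1 - p.2) ^ 2)) := by
  fun_prop

lemma costn_meas (n : ℕ) :
    Measurable (fun p : (Fin n → ℝ) × (Fin n → ℝ) =>
      ENNReal.ofReal (∑ i, (p.1 i - p.2 i) ^ 2)) := by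
  fun_prop

end Aux

/-- For product measures with square-integrable coordinate marginals, the squared
Wasserstein-2 distance is exactly additive across coordinates. -/
theorem W2sq_product_additive
    (n : ℕ) (μi νi : Fin n → Measure ℝ)
    [∀ i, IsProbabilityMeasure (μi i)] [∀ i, IsProbabilityMeasure (νi i)]
    (hμ2 : ∀ i, MemLp id 2 (μi i)) (hν2 : ∀ i, MemLp id 2 (νi i)) :
    W2sqn n (Measure.pi μi) (Measure.pi νi) = ∑ i : Fin n, W2sq1 (μi i) (νi i) := by
  classical
  apply le_antisymm
  · -- Upper bound: W2sqn ≤ Σ W2sq1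
    by_cases htop : ∃ i, W2sq1 (μi i) (νi i) = ⊤
    · obtain ⟨i, hi⟩ := htop
      have : (∑ i : Fin n, W2sq1 (μi i) (νi i)) = ⊤ :=
        ENNReal.sum_eq_top.2 ⟨i, Finset.mem_univ i, hi⟩
      rw [this]; exact le_top
    push_neg at htop
    refine ENNReal.le_of_forall_pos_le_add fun ε hε _ => ?_
    have hεn : (ε : ℝ≥0∞) / n ≠ 0 := by
      intro h
      rcases (ENNReal.div_eq_zero_iff.1 h) with h | h
      · exact absurd h (by exact_mod_cast hε.ne')
      · exact (ENNReal.natCast_ne_top n) h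
    -- pick near-optimal couplings in each coordinate
    have key : ∀ i : Fin n, ∃ π : Measure (ℝ × ℝ), ∃ _ : IsProbabilityMeasure π,
        ∃ _ : π.map Prod.fst = μi i, ∃ _ : π.map Prod.snd = νi i,
        ∫⁻ p, ENNReal.ofReal ((p.1 - p.2) ^ 2) ∂π < W2sq1 (μi i) (νi i) + ε / n := by
      intro i
      have h1 : (⨅ (π : Measure (ℝ × ℝ)) (_ : IsProbabilityMeasure π)
          (_ : π.map Prod.fst = μi i) (_ : π.map Prod.snd = νi i),
          ∫⁻ p, ENNReal.ofReal ((p.1 - p.2) ^ 2) ∂π)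
          < W2sq1 (μi i) (νi i) + ε / n := ENNReal.lt_add_right (htop i) hεn
      rw [iInf_lt_iff] at h1
      obtain ⟨π, h1⟩ := h1
      rw [iInf_lt_iff] at h1
      obtain ⟨hp, h1⟩ := h1
      rw [iInf_lt_iff] at h1
      obtain ⟨hf, h1⟩ := h1
      rw [iInf_lt_iff] at h1
      obtain ⟨hs, h1⟩ := h1
      exact ⟨π, hp, hf, hs, h1⟩
    choose π hprob hfst hsnd hcost using key
    haveI : ∀ i, IsProbabilityMeasure (π i) := hprob
    -- the product coupling, pushed to the pair-of-functions space
    set pairMap : (Fin n → ℝ × ℝ) → (Fin n → ℝ) × (Fin n → ℝ) :=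
      fun f => (fun i => (f i).1, fun i => (f i).2) with hpairMap
    have hmp : Measurable pairMap := by
      apply Measurable.prod <;> fun_prop
    set Γ : Measure ((Fin n → ℝ) × (Fin n → ℝ)) := (Measure.pi π).map pairMap with hΓ
    haveI : IsProbabilityMeasure Γ := Measure.isProbabilityMeasure_map hmp.aemeasurable
    have hΓfst : Γ.map Prod.fst = Measure.pi μi := by
      rw [hΓ, Measure.map_map measurable_fst hmp]
      exact (measurePreserving_pi π μi
        (fun i => ⟨measurable_fst, hfst i⟩)).map_eq
    have hΓsnd : Γ.map Prod.snd = Measure.pi νi := by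
      rw [hΓ, Measure.map_map measurable_snd hmp]
      exact (measurePreserving_pi π νi
        (fun i => ⟨measurable_snd, hsnd i⟩)).map_eq
    have hW : W2sqn n (Measure.pi μi) (Measure.pi νi)
        ≤ ∫⁻ p, ENNReal.ofReal (∑ i, (p.1 i - p.2 i) ^ 2) ∂Γ := by
      unfold W2sqn
      exact iInf_le_of_le Γ (iInf_le_of_le ‹IsProbabilityMeasure Γ›
        (iInf_le_of_le hΓfst (iInf_le _ hΓsnd)))
    have hcost_eq : ∫⁻ p, ENNReal.ofReal (∑ i, (p.1 i - p.2 i) ^ 2) ∂Γ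
        = ∑ i : Fin n, ∫⁻ p, ENNReal.ofReal ((p.1 - p.2) ^ 2) ∂(π i) := by
      rw [hΓ, lintegral_map (costn_meas n) hmp]
      have : ∀ f : Fin n → ℝ × ℝ,
          ENNReal.ofReal (∑ i, ((pairMap f).1 i - (pairMap f).2 i) ^ 2)
          = ∑ i : Fin n, ENNReal.ofReal (((f i).1 - (f i).2) ^ 2) := by
        intro f
        exact ENNReal.ofReal_sum_of_nonneg fun i _ => sq_nonneg _
      simp_rw [this]
      rw [lintegral_finset_sum _ (fun i _ => by fun_prop)]
      refine Finset.sum_congr rfl fun i _ => ?_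
      have := pi_map_eval' π i
      calc ∫⁻ f : Fin n → ℝ × ℝ, ENNReal.ofReal (((f i).1 - (f i).2) ^ 2) ∂(Measure.pi π)
          = ∫⁻ f : Fin n → ℝ × ℝ,
              (fun q : ℝ × ℝ => ENNReal.ofReal ((q.1 - q.2) ^ 2)) (Function.eval i f)
              ∂(Measure.pi π) := rfl
        _ = ∫⁻ q, ENNReal.ofReal ((q.1 - q.2) ^ 2) ∂((Measure.pi π).map (Function.eval i)) :=
            (lintegral_map cost1_meas (measurable_pi_apply i)).symm
        _ = ∫⁻ q, ENNReal.ofReal ((q.1 - q.2) ^ 2) ∂(π i) := by rw [this]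
    calc W2sqn n (Measure.pi μi) (Measure.pi νi)
        ≤ ∑ i : Fin n, ∫⁻ p, ENNReal.ofReal ((p.1 - p.2) ^ 2) ∂(π i) := hcost_eq ▸ hW
      _ ≤ ∑ i : Fin n, (W2sq1 (μi i) (νi i) + ε / n) :=
          Finset.sum_le_sum fun i _ => (hcost i).le
      _ = (∑ i : Fin n, W2sq1 (μi i) (νi i)) + (n : ℝ≥0∞) * ((ε : ℝ≥0∞) / n) := by
          rw [Finset.sum_add_distrib]
          simp [Finset.card_univ, mul_comm]
      _ ≤ (∑ i : Fin n, W2sq1 (μi i) (νi i)) + ε := by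
          gcongr
          exact ENNReal.mul_div_le
  · -- Lower bound: Σ W2sq1 ≤ W2sqn
    unfold W2sqn
    refine le_iInf fun Γ => le_iInf fun hΓ => le_iInf fun hΓfst => le_iInf fun hΓsnd => ?_
    haveI := hΓ
    set πi : ∀ _ : Fin n, Measure (ℝ × ℝ) :=
      fun i => Γ.map (fun p => (p.1 i, p.2 i)) with hπi
    have hmi : ∀ i : Fin n,
        Measurable (fun p : (Fin n → ℝ) × (Fin n → ℝ) => (p.1 i, p.2 i)) := by
      intro i; fun_prop
    have key : ∀ i : Fin n, W2sq1 (μi i) (νi i)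
        ≤ ∫⁻ p, ENNReal.ofReal ((p.1 i - p.2 i) ^ 2) ∂Γ := by
      intro i
      haveI : IsProbabilityMeasure (πi i) := Measure.isProbabilityMeasure_map (hmi i).aemeasurable
      have hf : (πi i).map Prod.fst = μi i := by
        rw [hπi, Measure.map_map measurable_fst (hmi i)]
        have : (Prod.fst ∘ fun p : (Fin n → ℝ) × (Fin n → ℝ) => (p.1 i, p.2 i))
            = Function.eval i ∘ Prod.fst := rfl
        rw [this, ← Measure.map_map (measurable_pi_apply i) measurable_fst, hΓfst,
          pi_map_eval' μi i]
      have hs : (πi i).map Prod.snd = νi i := by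
        rw [hπi, Measure.map_map measurable_snd (hmi i)]
        have : (Prod.snd ∘ fun p : (Fin n → ℝ) × (Fin n → ℝ) => (p.1 i, p.2 i))
            = Function.eval i ∘ Prod.snd := rfl
        rw [this, ← Measure.map_map (measurable_pi_apply i) measurable_snd, hΓsnd,
          pi_map_eval' νi i]
      have h1 : W2sq1 (μi i) (νi i) ≤ ∫⁻ p, ENNReal.ofReal ((p.1 - p.2) ^ 2) ∂(πi i) := by
        unfold W2sq1
        exact iInf_le_of_le (πi i) (iInf_le_of_le ‹IsProbabilityMeasure (πi i)›
          (iInf_le_of_le hf (iInf_le _ hs)))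
      have h2 : ∫⁻ p, ENNReal.ofReal ((p.1 - p.2) ^ 2) ∂(πi i)
          = ∫⁻ p, ENNReal.ofReal ((p.1 i - p.2 i) ^ 2) ∂Γ := by
        rw [hπi, lintegral_map cost1_meas (hmi i)]
      exact h1.trans h2.le
    calc (∑ i : Fin n, W2sq1 (μi i) (νi i))
        ≤ ∑ i : Fin n, ∫⁻ p, ENNReal.ofReal ((p.1 i - p.2 i) ^ 2) ∂Γ :=
          Finset.sum_le_sum fun i _ => key i
      _ = ∫⁻ p, ∑ i : Fin n, ENNReal.ofReal ((p.1 i - p.2 i) ^ 2) ∂Γ :=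
          (lintegral_finset_sum _ (fun i _ => by fun_prop)).symm
      _ = ∫⁻ p, ENNReal.ofReal (∑ i, (p.1 i - p.2 i) ^ 2) ∂Γ := by
          refine lintegral_congr fun p => ?_
          exact (ENNReal.ofReal_sum_of_nonneg fun i _ => sq_nonneg _).symm
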